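/- If T ⊥ Z | S and (Y(1), Y(0)) ⊥ T | Z, with S = S(Z) a function of Z, then (Y(1), Y(0)) ⊥ T | S; that is, strong ignorability given covariates plus the balancing property implies strong ignorability given the balancing score. -/

import Mathlib

open MeasureTheory

/-- If `T ⊥ Z ∣ S` and `(Y(1), Y(0)) ⊥ T ∣ Z` with `S = S(Z)` a function of `Z`, then
`(Y(1), Y(0)) ⊥ T ∣ S`: strong ignorability given covariates plus the balancing property
implies strong ignorability given the balancing score. -/
theorem ignorability_given_balancing_score
    {Ω : Type*} [MeasurableSpace Ω] (μ : Measure Ω) [IsProbabilityMeasure μ]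
    {M : ℕ} (Z : Ω → (Fin M → ℝ)) (hZ : Measurable Z)
    (T : Ω → ℝ) (hT : Measurable T) (hT01 : ∀ ω, T ω = 0 ∨ T ω = 1)
    (Y1 Y0 : Ω → ℝ) (hY1 : Measurable Y1) (hY0 : Measurable Y0)
    (S : Ω → ℝ) (S0 : (Fin M → ℝ) → ℝ) (hS0 : Measurable S0)
    (hSZ : S = fun ω => S0 (Z ω))
    (mS : MeasurableSpace Ω) (hmS : mS = MeasurableSpace.comap S inferInstance)
    (hbal : ∀ f : (Fin M → ℝ) → ℝ, Measurable f → (∃ C, ∀ x, |f x| ≤ C) →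
      μ[fun ω => T ω * f (Z ω) | mS]
        =ᵐ[μ] fun ω => (μ[T | mS]) ω * (μ[fun ω => f (Z ω) | mS]) ω)
    (hignor : ∀ g : ℝ × ℝ → ℝ, Measurable g → (∃ C, ∀ x, |g x| ≤ C) →
      μ[fun ω => T ω * g (Y1 ω, Y0 ω) | MeasurableSpace.comap Z inferInstance]
        =ᵐ[μ] fun ω => (μ[T | MeasurableSpace.comap Z inferInstance]) ω *
          (μ[fun ω => g (Y1 ω, Y0 ω) | MeasurableSpace.comap Z inferInstance]) ω) :
    ∀ g : ℝ × ℝ → ℝ, Measurable g → (∃ C, ∀ x, |g x| ≤ C) →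
      μ[fun ω => T ω * g (Y1 ω, Y0 ω) | mS]
        =ᵐ[μ] fun ω => (μ[T | mS]) ω * (μ[fun ω => g (Y1 ω, Y0 ω) | mS]) ω := by
  rename_i m0 hP
  letI : MeasurableSpace Ω := m0
  intro g hg hgbdd
  have hmZ := hZ.comap_le
  have hmSZ : mS ≤ MeasurableSpace.comap Z inferInstance := by
    rw [hmS, hSZ]
    have h1 : (fun ω => S0 (Z ω)) = S0 ∘ Z := rfl
    rw [h1, ← MeasurableSpace.comap_comp]
    exact MeasurableSpace.comap_mono hS0.comap_le
  have hmSle := hmSZ.trans hmZ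
  -- boundedness of T
  have hTbd : ∀ ω, |T ω| ≤ 1 := by
    intro ω; rcases hT01 ω with h | h <;> simp [h]
  have hTint : Integrable T μ :=
    ⟨hT.aestronglyMeasurable, HasFiniteIntegral.of_bounded (C := 1)
      (Filter.Eventually.of_forall fun ω => by simpa using hTbd ω)⟩
  -- a.e. bound on condexp of T
  have hcTbd : ∀ᵐ ω ∂μ, |(μ[T|mS]) ω| ≤ ((1 : NNReal) : ℝ) :=
    ae_bdd_condExp_of_ae_bdd (Filter.Eventually.of_forall fun ω => by simpa using hTbd ω)
  have hcTasm : AEStronglyMeasurable (μ[T|mS]) μ :=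
    (stronglyMeasurable_condExp.mono hmSle).aestronglyMeasurable
  -- Step 1: μ[T|mS] =ᵐ μ[T|mZ]
  have key : (μ[T|mS]) =ᵐ[μ] μ[T|MeasurableSpace.comap Z inferInstance] := by
    refine ae_eq_condExp_of_forall_setIntegral_eq hmZ hTint
      (fun s _ _ => integrable_condExp.restrict) (fun s hs _ => ?_)
      ((stronglyMeasurable_condExp.mono hmSZ).aestronglyMeasurable)
    obtain ⟨B, hB, rfl⟩ := hs
    have hsm := hZ hB
    set f : (Fin M → ℝ) → ℝ := B.indicator (fun _ => (1:ℝ)) with hf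
    have hfmeas : Measurable f := measurable_const.indicator hB
    have hfbd : ∀ x, |f x| ≤ 1 := by
      intro x; by_cases hx : x ∈ B <;> simp [hf, Set.indicator_apply, hx]
    have hfZint : Integrable (fun ω => f (Z ω)) μ :=
      ⟨((hfmeas.comp hZ).aestronglyMeasurable), HasFiniteIntegral.of_bounded (C := 1)
        (Filter.Eventually.of_forall fun ω => by simpa using hfbd (Z ω))⟩
    have hind : ∀ (h : Ω → ℝ), ∀ ω, (Z ⁻¹' B).indicator h ω = h ω * f (Z ω) := by
      intro h ω
      by_cases hx : Z ω ∈ B <;> simp [Set.indicator_apply, hx, hf]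
    have hTfint : Integrable (fun ω => T ω * f (Z ω)) μ :=
      hfZint.bdd_mul (c := 1) hT.aestronglyMeasurable
        (Filter.Eventually.of_forall fun ω => by simpa using hTbd ω)
    have hcTfint : Integrable (fun ω => (μ[T|mS]) ω * f (Z ω)) μ :=
      hfZint.bdd_mul (c := 1) hcTasm
        (by filter_upwards [hcTbd] with ω h using by simpa using h)
    have hpull : μ[fun ω => (μ[T|mS]) ω * f (Z ω) | mS]
        =ᵐ[μ] fun ω => (μ[T|mS]) ω * (μ[fun ω => f (Z ω) | mS]) ω :=
      condExp_mul_of_stronglyMeasurable_left stronglyMeasurable_condExp hcTfint hfZint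
    rw [← @integral_indicator Ω ℝ _ _ _ (μ[T|mS]) _ μ hsm, ← @integral_indicator Ω ℝ _ _ _ T _ μ hsm]
    calc ∫ ω, (Z ⁻¹' B).indicator (μ[T|mS]) ω ∂μ
        = ∫ ω, (μ[T|mS]) ω * f (Z ω) ∂μ :=
          integral_congr_ae (Filter.Eventually.of_forall fun ω => hind _ ω)
      _ = ∫ ω, (μ[fun ω => (μ[T|mS]) ω * f (Z ω) | mS]) ω ∂μ :=
          (integral_condExp hmSle).symm
      _ = ∫ ω, (μ[T|mS]) ω * (μ[fun ω => f (Z ω) | mS]) ω ∂μ := integral_congr_ae hpull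
      _ = ∫ ω, (μ[fun ω => T ω * f (Z ω) | mS]) ω ∂μ :=
          (integral_congr_ae (hbal f hfmeas ⟨1, hfbd⟩)).symm
      _ = ∫ ω, T ω * f (Z ω) ∂μ := integral_condExp hmSle
      _ = ∫ ω, (Z ⁻¹' B).indicator T ω ∂μ :=
          (integral_congr_ae (Filter.Eventually.of_forall fun ω => hind T ω)).symm
  -- Step 2: main chain
  obtain ⟨C, hC⟩ := hgbdd
  have hGmeas := hg.comp (hY1.prodMk hY0)
  have hGint : Integrable (fun ω => g (Y1 ω, Y0 ω)) μ :=
    ⟨hGmeas.aestronglyMeasurable, HasFiniteIntegral.of_bounded (C := C)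
      (Filter.Eventually.of_forall fun ω => by simpa using hC (Y1 ω, Y0 ω))⟩
  have tower1 : μ[fun ω => T ω * g (Y1 ω, Y0 ω) | mS]
      =ᵐ[μ] μ[μ[fun ω => T ω * g (Y1 ω, Y0 ω) | MeasurableSpace.comap Z inferInstance] | mS] :=
    (condExp_condExp_of_le hmSZ hmZ).symm
  have step3 : (fun ω => (μ[T|MeasurableSpace.comap Z inferInstance]) ω *
        (μ[fun ω => g (Y1 ω, Y0 ω) | MeasurableSpace.comap Z inferInstance]) ω)
      =ᵐ[μ] fun ω => (μ[T|mS]) ω *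
        (μ[fun ω => g (Y1 ω, Y0 ω) | MeasurableSpace.comap Z inferInstance]) ω := by
    filter_upwards [key] with ω h
    rw [← h]
  have hprodint : Integrable (fun ω => (μ[T|mS]) ω *
      (μ[fun ω => g (Y1 ω, Y0 ω) | MeasurableSpace.comap Z inferInstance]) ω) μ :=
    Integrable.bdd_mul (c := 1) integrable_condExp hcTasm
      (by filter_upwards [hcTbd] with ω h using by simpa using h)
  have pull : μ[fun ω => (μ[T|mS]) ω *
        (μ[fun ω => g (Y1 ω, Y0 ω) | MeasurableSpace.comap Z inferInstance]) ω | mS]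
      =ᵐ[μ] fun ω => (μ[T|mS]) ω *
        (μ[μ[fun ω => g (Y1 ω, Y0 ω) | MeasurableSpace.comap Z inferInstance] | mS]) ω :=
    condExp_mul_of_stronglyMeasurable_left stronglyMeasurable_condExp hprodint integrable_condExp
  have tower2 : μ[μ[fun ω => g (Y1 ω, Y0 ω) | MeasurableSpace.comap Z inferInstance] | mS]
      =ᵐ[μ] μ[fun ω => g (Y1 ω, Y0 ω) | mS] := condExp_condExp_of_le hmSZ hmZ
  calc μ[fun ω => T ω * g (Y1 ω, Y0 ω) | mS]
      =ᵐ[μ] μ[μ[fun ω => T ω * g (Y1 ω, Y0 ω) | MeasurableSpace.comap Z inferInstance] | mS] :=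
        tower1
    _ =ᵐ[μ] μ[fun ω => (μ[T|mS]) ω *
          (μ[fun ω => g (Y1 ω, Y0 ω) | MeasurableSpace.comap Z inferInstance]) ω | mS] :=
        condExp_congr_ae ((hignor g hg ⟨C, hC⟩).trans step3)
    _ =ᵐ[μ] fun ω => (μ[T|mS]) ω *
          (μ[μ[fun ω => g (Y1 ω, Y0 ω) | MeasurableSpace.comap Z inferInstance] | mS]) ω := pull
    _ =ᵐ[μ] fun ω => (μ[T|mS]) ω * (μ[fun ω => g (Y1 ω, Y0 ω) | mS]) ω := by
        filter_upwards [tower2] with ω h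
        rw [h]
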